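/- For every n ≥ 1, there exists a superpermutation on n symbols of length ∑_{i=1}^{n} i!. -/

import Mathlib

open List

namespace SuperpermAux

variable {α β : Type*}

/-- window `j` of the block `q ++ [x] ++ q`. -/
def win (x : α) (q : List α) (j : ℕ) : List α := q.drop j ++ x :: q.take j

/-- local validity of a chain: each `fst` is a suffix of previous `fst ++ snd`. -/
def VF : List α → List (List α × List α) → Prop
  | _, [] => True
  | Q, p :: r => p.1 <:+ Q ++ p.2 ∧ VF p.1 r

/-- the within-block steps (windows `1..q.length`). -/
def blk (x : α) (q : List α) : List (List α × List α) :=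
  (List.range q.length).map (fun j => (win x q (j + 1), (q.drop j).take 1))

/-- transform a chain on the small alphabet into block entries on the big one. -/
def grow (x : α) : List (List α × List α) → List (List α × List α)
  | [] => []
  | p :: r => ((p.1 ++ [x], p.2 ++ [x]) :: blk x p.1) ++ grow x r

lemma win_zero (x : α) (q : List α) : win x q 0 = q ++ [x] := by
  simp [win]

lemma win_len (x : α) (q : List α) : win x q q.length = x :: q := by
  simp [win]

lemma win_length (x : α) (q : List α) {j : ℕ} (hj : j ≤ q.length) :
    (win x q j).length = q.length + 1 := by
  simp [win]; omega

lemma win_step (x : α) (q : List α) {j : ℕ} (hj : j < q.length) :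
    win x q j ++ (q.drop j).take 1 = q[j] :: win x q (j + 1) := by
  have hd : q.drop j = q[j] :: q.drop (j + 1) := List.drop_eq_getElem_cons hj
  have ht : q.take (j + 1) = q.take j ++ [q[j]] := by
    rw [List.take_succ]
    simp [List.getElem?_eq_getElem hj]
  have h1 : (q.drop j).take 1 = [q[j]] := by rw [hd]; rfl
  rw [win, win, h1, hd, ht]
  simp only [List.cons_append, List.append_assoc]

lemma VF_range' (x : α) (q : List α) :
    ∀ (k j : ℕ), j + k ≤ q.length →
      VF (win x q j)
        ((List.range' j k).map (fun i => (win x q (i + 1), (q.drop i).take 1)))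
  | 0, j, _ => trivial
  | k + 1, j, h => by
    rw [List.range'_succ, List.map_cons]
    refine ⟨?_, VF_range' x q k (j + 1) (by omega)⟩
    rw [win_step x q (by omega : j < q.length)]
    exact (List.suffix_cons _ _)

lemma foldl_range' (x : α) (q : List α) :
    ∀ (k j : ℕ),
      ((List.range' j k).map (fun i => (win x q (i + 1), (q.drop i).take 1))).foldl
        (fun _ p => p.1) (win x q j) = win x q (j + k)
  | 0, j => rfl
  | k + 1, j => by
    rw [List.range'_succ, List.map_cons, List.foldl_cons]
    have := foldl_range' x q k (j + 1)
    simpa [Nat.add_assoc, Nat.add_comm 1 k] using this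

lemma VF_blk (x : α) (q : List α) : VF (win x q 0) (blk x q) := by
  rw [blk, List.range_eq_range']
  exact VF_range' x q q.length 0 (by omega)

lemma foldl_blk (x : α) (q : List α) :
    (blk x q).foldl (fun _ p => p.1) (win x q 0) = x :: q := by
  rw [blk, List.range_eq_range', foldl_range']
  simpa using win_len x q

lemma VF_append {Q : List α} :
    ∀ {l1 l2 : List (List α × List α)}, VF Q l1 →
      VF (l1.foldl (fun _ p => p.1) Q) l2 → VF Q (l1 ++ l2) := by
  intro l1
  induction l1 generalizing Q with
  | nil => intro l2 _ h2; simpa using h2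
  | cons p r ih =>
    intro l2 h1 h2
    exact ⟨h1.1, ih h1.2 h2⟩

lemma VF_map (f : α → β) :
    ∀ {r : List (List α × List α)} {Q : List α}, VF Q r →
      VF (Q.map f) (r.map (fun p => (p.1.map f, p.2.map f)))
  | [], _, _ => trivial
  | p :: r, Q, h => by
    refine ⟨?_, VF_map f h.2⟩
    have := h.1.map f
    simpa using this

lemma VF_grow (x : α) :
    ∀ (r : List (List α × List α)) (Q : List α), VF Q r →
      VF (x :: Q) (grow x r)
  | [], _, _ => trivial
  | p :: r, Q, h => by
    rw [grow, List.cons_append]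
    refine ⟨?_, ?_⟩
    · -- p.1 ++ [x] <:+ (x :: Q) ++ (p.2 ++ [x])
      obtain ⟨s, hs⟩ := h.1
      refine ⟨x :: s, ?_⟩
      simp only [List.cons_append, ← List.append_assoc, hs]
    · -- VF (p.1 ++ [x]) (blk x p.1 ++ grow x r)
      rw [← win_zero]
      refine VF_append (VF_blk x p.1) ?_
      rw [foldl_blk]
      exact VF_grow x r p.1 h.2

lemma VF_infix {Q : List α} :
    ∀ {r : List (List α × List α)}, VF Q r →
      ∀ p ∈ r, p.1 <:+: Q ++ (r.map Prod.snd).flatten := by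
  intro r
  induction r generalizing Q with
  | nil => intro _ p hp; simp at hp
  | cons p0 r ih =>
    intro h p hp
    simp only [List.map_cons, List.flatten_cons]
    rcases List.mem_cons.mp hp with hp | hp
    · have h2 : Q ++ p0.2 <+: Q ++ (p0.2 ++ (r.map Prod.snd).flatten) := by
        rw [← List.append_assoc]; exact List.prefix_append _ _
      rw [hp]
      exact h.1.isInfix.trans h2.isInfix
    · have hsub := ih h.2 p hp
      obtain ⟨s, hs⟩ := h.1
      have h2 : p0.1 ++ (r.map Prod.snd).flatten <:+
          Q ++ (p0.2 ++ (r.map Prod.snd).flatten) := by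
        have he : Q ++ (p0.2 ++ (r.map Prod.snd).flatten)
            = s ++ (p0.1 ++ (r.map Prod.snd).flatten) := by
          rw [← List.append_assoc, ← hs, List.append_assoc]
        rw [he]
        exact List.suffix_append _ _
      exact hsub.trans h2.isInfix

lemma mem_blk (x : α) (q : List α) {j : ℕ} (hj : j < q.length) :
    win x q (j + 1) ∈ (blk x q).map Prod.fst := by
  simp only [blk, List.map_map, List.mem_map, List.mem_range]
  exact ⟨j, hj, rfl⟩

lemma mem_grow (x : α) :
    ∀ (r : List (List α × List α)) (p : List α × List α), p ∈ r →
      ∀ j ≤ p.1.length, win x p.1 j ∈ (grow x r).map Prod.fst := by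
  intro r
  induction r with
  | nil => intro p hp; simp at hp
  | cons p0 r ih =>
    intro p hp j hj
    rw [grow, List.map_append, List.mem_append]
    rcases List.mem_cons.mp hp with hp | hp
    · subst hp
      left
      rcases j with _ | j'
      · rw [win_zero]; simp
      · rw [List.map_cons, List.mem_cons]
        exact Or.inr (mem_blk x p.1 (by omega))
    · exact Or.inr (ih p hp j hj)

lemma grow_fst_length (x : α) {n : ℕ} :
    ∀ (r : List (List α × List α)), (∀ p ∈ r, p.1.length = n) →
      ∀ p' ∈ grow x r, p'.1.length = n + 1 := by
  intro r
  induction r with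
  | nil => intro _ p' hp'; simp [grow] at hp'
  | cons p0 r ih =>
    intro h p' hp'
    rw [grow, List.mem_append, List.mem_cons] at hp'
    rcases hp' with (hp' | hp') | hp'
    · subst hp'; simp [h p0 (by simp)]
    · simp only [blk, List.mem_map, List.mem_range] at hp'
      obtain ⟨j, hj, rfl⟩ := hp'
      rw [win_length x _ (by omega)]
      rw [h p0 (by simp)]
    · exact ih (fun p hp => h p (by simp [hp])) p' hp'

lemma blk_length (x : α) (q : List α) : (blk x q).length = q.length := by
  simp [blk]

lemma blk_snd_sum (x : α) (q : List α) :
    ((blk x q).map (fun p => p.2.length)).sum = q.length := by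
  rw [blk, List.map_map]
  have : ∀ j ∈ List.range q.length,
      ((fun p : List α × List α => p.2.length) ∘
        (fun j => (win x q (j + 1), (q.drop j).take 1))) j = 1 := by
    intro j hj
    rw [List.mem_range] at hj
    simp; omega
  rw [List.map_congr_left this]
  simp [List.map_const']

lemma grow_length (x : α) :
    ∀ (r : List (List α × List α)),
      (grow x r).length = (r.map (fun p => 1 + p.1.length)).sum
  | [] => rfl
  | p :: r => by
    rw [grow, List.length_append, grow_length x r]
    simp [blk_length]
    omega

lemma grow_snd_sum (x : α) :
    ∀ (r : List (List α × List α)),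
      ((grow x r).map (fun p => p.2.length)).sum
        = (r.map (fun p => p.2.length + 1 + p.1.length)).sum
  | [] => rfl
  | p :: r => by
    rw [grow, List.map_append, List.sum_append, grow_snd_sum x r]
    simp [blk_snd_sum]

lemma sum_map_const_add (r : List (List α × List α)) (f : List α × List α → ℕ) (k : ℕ) :
    (r.map (fun p => f p + k)).sum = (r.map f).sum + r.length * k := by
  induction r with
  | nil => simp
  | cons p r ih => simp [ih]; ring

/-- decomposition of a rainbow word over `Fin (n+1)` as a window. -/
lemma decomp (n : ℕ) (l : List (Fin (n + 1))) (hnd : l.Nodup) (hl : l.length = n + 1) :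
    ∃ q : List (Fin n), q.Nodup ∧ q.length = n ∧
      ∃ j ≤ n, l = win (Fin.last n) (q.map Fin.castSucc) j := by
  have hmem : Fin.last n ∈ l := by
    have hcard : l.toFinset.card = n + 1 := by
      rw [List.toFinset_card_of_nodup hnd, hl]
    have : l.toFinset = Finset.univ := Finset.eq_univ_of_card _ (by simp [hcard])
    have : Fin.last n ∈ l.toFinset := this ▸ Finset.mem_univ _
    simpa using this
  obtain ⟨k, hk, hkl⟩ := List.mem_iff_getElem.mp hmem
  have hsplit : l = l.take k ++ Fin.last n :: l.drop (k + 1) := by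
    conv_lhs => rw [← List.take_append_drop k l, List.drop_eq_getElem_cons hk, hkl]
  set A := l.take k with hA
  set B := l.drop (k + 1) with hB
  have hAlen : A.length = k := by
    rw [hA, List.length_take]; omega
  have hBlen : B.length = n - k := by
    rw [hB, List.length_drop]; omega
  have hnd' : (A ++ Fin.last n :: B).Nodup := hsplit ▸ hnd
  rw [List.nodup_middle] at hnd'
  have hABnd : (A ++ B).Nodup := hnd'.of_cons
  have hnotmem : Fin.last n ∉ A ++ B := (List.nodup_cons.mp hnd').1
  have hq'nd : (B ++ A).Nodup := List.nodup_append_comm.mp hABnd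
  have hq'notmem : Fin.last n ∉ B ++ A := by
    intro h; exact hnotmem (by rw [List.mem_append] at h ⊢; tauto)
  set q' := B ++ A with hq'
  have hne : ∀ a ∈ q', a ≠ Fin.last n := fun a ha he => hq'notmem (he ▸ ha)
  refine ⟨q'.pmap Fin.castPred hne, ?_, ?_, n - k, by omega, ?_⟩
  · have hmapeq : (q'.pmap Fin.castPred hne).map Fin.castSucc = q' := by
      rw [List.map_pmap]
      simp [Fin.castSucc_castPred]
    exact List.Nodup.of_map _ (by rw [hmapeq]; exact hq'nd)
  · rw [List.length_pmap, hq', List.length_append, hAlen, hBlen]; omega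
  · have hmapeq : (q'.pmap Fin.castPred hne).map Fin.castSucc = q' := by
      rw [List.map_pmap]
      simp [Fin.castSucc_castPred]
    rw [hmapeq, win, hq', List.drop_left' (by omega : B.length = n - k),
      List.take_left' (by omega : B.length = n - k)]
    exact hsplit

/-- The key inductive construction. -/
lemma main (n : ℕ) :
    ∃ (hd : List (Fin n)) (rest : List (List (Fin n) × List (Fin n))),
      hd.length = n ∧ (∀ p ∈ rest, p.1.length = n) ∧
      rest.length + 1 = Nat.factorial n ∧
      VF hd rest ∧
      (∀ l : List (Fin n), l.Nodup → l.length = n → l = hd ∨ l ∈ rest.map Prod.fst) ∧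
      hd.length + (rest.map (fun p => p.2.length)).sum = ∑ i ∈ Finset.Icc 1 n, Nat.factorial i := by
  induction n with
  | zero =>
    refine ⟨[], [], rfl, by simp, by simp, trivial, ?_, by simp⟩
    intro l _ hl
    left
    exact List.length_eq_zero_iff.mp hl
  | succ n ih =>
    obtain ⟨hd, rest, hhd, hfst, hcount, hvf, hcov, hsum⟩ := ih
    set c : Fin n → Fin (n + 1) := Fin.castSucc with hc
    set x : Fin (n + 1) := Fin.last n with hx
    set q0 : List (Fin (n + 1)) := hd.map c with hq0
    have hq0len : q0.length = n := by simp [hq0, hhd]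
    set mrest : List (List (Fin (n + 1)) × List (Fin (n + 1))) :=
      rest.map (fun p => (p.1.map c, p.2.map c)) with hmrest
    have hmfst : ∀ p ∈ mrest, p.1.length = n := by
      intro p hp
      rw [hmrest, List.mem_map] at hp
      obtain ⟨p', hp', rfl⟩ := hp
      simp [hfst p' hp']
    refine ⟨q0 ++ [x], blk x q0 ++ grow x mrest, by simp [hq0len], ?_, ?_, ?_, ?_, ?_⟩
    · -- fst lengths
      intro p hp
      rw [List.mem_append] at hp
      rcases hp with hp | hp
      · simp only [blk, List.mem_map, List.mem_range] at hp
        obtain ⟨j, hj, rfl⟩ := hp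
        rw [win_length x _ (by omega)]; omega
      · exact grow_fst_length x mrest hmfst p hp
    · -- count
      rw [List.length_append, blk_length, hq0len, grow_length,
        List.map_congr_left (fun p hp => by rw [hmfst p hp] : ∀ p ∈ mrest, 1 + p.1.length = 1 + n)]
      simp only [List.map_const', List.sum_replicate, smul_eq_mul]
      have hml : mrest.length = rest.length := by simp [hmrest]
      rw [hml, Nat.factorial_succ, ← hcount]
      ring
    · -- validity
      rw [← win_zero]
      refine VF_append (VF_blk x q0) ?_
      rw [foldl_blk]
      exact VF_grow x mrest q0 (VF_map c hvf)
    · -- coverage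
      intro l hlnd hll
      obtain ⟨q, hqnd, hqlen, j, hj, rfl⟩ := decomp n l hlnd hll
      rcases hcov q hqnd hqlen with hq | hq
      · subst hq
        rcases j with _ | j'
        · left; rw [win_zero]
        · right
          rw [List.map_append, List.mem_append]
          exact Or.inl (mem_blk x q0 (by omega))
      · right
        rw [List.map_append, List.mem_append]
        right
        rw [List.mem_map] at hq
        obtain ⟨p, hp, hpq⟩ := hq
        have hpm : (p.1.map c, p.2.map c) ∈ mrest := by
          rw [hmrest, List.mem_map]; exact ⟨p, hp, rfl⟩
        have := mem_grow x mrest (p.1.map c, p.2.map c) hpm j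
          (by simp [hfst p hp, hpq]; omega)
        simpa [hpq] using this
    · -- length sum
      rw [List.map_append, List.sum_append, blk_snd_sum, hq0len, grow_snd_sum]
      have hstep : ∀ p ∈ mrest, p.2.length + 1 + p.1.length = p.2.length + (1 + n) := by
        intro p hp; rw [hmfst p hp]; ring
      rw [List.map_congr_left hstep, sum_map_const_add]
      have hms : (mrest.map (fun p => p.2.length)).sum
          = (rest.map (fun p => p.2.length)).sum := by
        rw [hmrest, List.map_map]
        congr 1
        apply List.map_congr_left
        intro p _; simp
      have hml : mrest.length = rest.length := by simp [hmrest]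
      rw [hms, hml, Finset.sum_Icc_succ_top (by omega : 1 ≤ n + 1), ← hsum,
        List.length_append, hq0len, Nat.factorial_succ, ← hcount, hhd]
      simp
      ring

end SuperpermAux

/-- A superpermutation on `n` symbols: a word over `Fin n` containing every
permutation of `Fin n` (viewed as the word `σ 0, σ 1, …, σ (n-1)`) as a
contiguous substring (infix). -/
def IsSuperperm (n : ℕ) (w : List (Fin n)) : Prop :=
  ∀ σ : Equiv.Perm (Fin n), List.ofFn ⇑σ <:+: w

theorem stmt_1 (n : ℕ) (hn : 1 ≤ n) :
    ∃ w : List (Fin n), IsSuperperm n w ∧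
      w.length = ∑ i ∈ Finset.Icc 1 n, Nat.factorial i := by
  obtain ⟨hd, rest, hhd, hfst, hcount, hvf, hcov, hsum⟩ := SuperpermAux.main n
  refine ⟨hd ++ (rest.map Prod.snd).flatten, ?_, ?_⟩
  · intro σ
    have hnd : (List.ofFn ⇑σ).Nodup := List.nodup_ofFn.mpr σ.injective
    have hlen : (List.ofFn ⇑σ).length = n := List.length_ofFn
    rcases hcov _ hnd hlen with h | h
    · rw [h]; exact (List.prefix_append _ _).isInfix
    · rw [List.mem_map] at h
      obtain ⟨p, hp, hpe⟩ := h
      rw [← hpe]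
      exact SuperpermAux.VF_infix hvf p hp
  · rw [List.length_append, List.length_flatten, ← hsum, List.map_map]
    congr 1
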